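/- Let n≥3 be odd, u ∈ F_{3^n}\F_3 with χ(u+1)≠χ(u-1), s²=1-u², φ=1+s. With g₁(z)=-(u+1)z, g₂(z)=z(z-1-u), g₃(z)=z(z-1+u), g₅(z)=-φ(z+1-s), we have ∑_{z∈F_{3^n}} χ(g₂(z)g₃(z)g₅(z)) + ∑_{z∈F_{3^n}} χ(g₁(z)g₂(z)g₃(z)g₅(z)) = 2. -/

import Mathlib

set_option maxHeartbeats 1600000 in

theorem stmt_13 (n : ℕ) (hn : 3 ≤ n) (hodd : Odd n)
    (F : Type*) [Field F] [Fintype F] [DecidableEq F]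
    (hcard : Fintype.card F = 3 ^ n)
    (u : F) (hu : u ^ 3 ≠ u)
    (huu : quadraticChar F (u + 1) ≠ quadraticChar F (u - 1))
    (s : F) (hs : s ^ 2 = 1 - u ^ 2) :
    (∑ z : F, quadraticChar F
        ((z * (z - 1 - u)) * (z * (z - 1 + u)) * (-(1 + s) * (z + 1 - s)))) +
      (∑ z : F, quadraticChar F
        ((-(u + 1) * z) * (z * (z - 1 - u)) * (z * (z - 1 + u)) *
          (-(1 + s) * (z + 1 - s)))) = 2 := by
  classical
  -- characteristic is 3
  haveI : CharP F (ringChar F) := ringChar.charP F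
  have hp : (ringChar F).Prime := CharP.char_is_prime F (ringChar F)
  obtain ⟨m, -, hm⟩ := FiniteField.card F (ringChar F)
  have hp3 : ringChar F = 3 := by
    have hdvd : ringChar F ∣ 3 ^ n := by
      have h1 : ringChar F ∣ Fintype.card F := hm ▸ dvd_pow_self (ringChar F) m.pos.ne'
      rwa [hcard] at h1
    exact (Nat.prime_dvd_prime_iff_eq hp (by norm_num)).mp (hp.dvd_of_dvd_pow hdvd)
  haveI hC3 : CharP F 3 := by rw [← hp3]; infer_instance
  have h3 : (3 : F) = 0 := CharP.cast_eq_zero F 3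
  -- χ(-1) = -1
  have hm1 : quadraticChar F (-1 : F) = -1 := by
    rw [quadraticChar_neg_one_iff_not_isSquare, FiniteField.isSquare_neg_one_iff, hcard]
    push_neg
    obtain ⟨k, rfl⟩ := hodd
    rw [pow_succ, pow_mul, Nat.mul_mod, Nat.pow_mod]
    norm_num
  -- nonvanishing facts
  have hu0 : u ≠ 0 := by rintro rfl; exact hu (by norm_num)
  have hu1 : u ≠ 1 := by rintro rfl; exact hu (by norm_num)
  have hum : u ≠ -1 := by rintro rfl; exact hu (by norm_num)
  have hs0 : s ≠ 0 := by
    intro h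
    have h1 : (u - 1) * (u + 1) = 0 := by linear_combination hs - s * h
    rcases mul_eq_zero.mp h1 with h2 | h2
    · exact hu1 (by linear_combination h2)
    · exact hum (by linear_combination h2)
  have hφ : (1 : F) + s ≠ 0 := by
    intro h
    have h1 : u ^ 2 = 0 := by linear_combination hs + (1 - s) * h
    exact hu0 (pow_eq_zero_iff (by norm_num : (2 : ℕ) ≠ 0) |>.mp h1)
  have hw0 : (1 : F) + u + s ≠ 0 := by
    intro h
    have h1 : u * (u + 1) = 0 := by
      linear_combination (-1 : F) * hs + (s - 1 - u) * h + (u ^ 2 + u) * h3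
    rcases mul_eq_zero.mp h1 with h2 | h2
    · exact hu0 h2
    · exact hum (by linear_combination h2)
  -- χ((u+1)(1+s)) = -1
  have hkey : quadraticChar F ((u + 1) * (1 + s)) = -1 := by
    have hJ : (-1 : F) * ((u + 1) * (1 + s)) = (1 + u + s) ^ 2 := by
      linear_combination (-1 : F) * hs + (-(u * s) - u - s - 1) * h3
    have h2 := congrArg (quadraticChar F) hJ
    rw [map_mul, hm1, quadraticChar_sq_one' hw0] at h2
    linarith
  -- sum over a bijection
  have hbijsum : ∀ f : F → F, Function.Bijective f → ∀ g : F → ℤ,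
      (∑ x : F, g (f x)) = ∑ x : F, g x :=
    fun f hf g => Fintype.sum_bijective f hf (fun x => g (f x)) g fun _ => rfl
  have haff : ∀ a b : F, a ≠ 0 → Function.Bijective fun x : F => b + a * x := by
    intro a b ha
    refine ⟨fun x y hxy => mul_left_cancel₀ ha (add_left_cancel hxy), fun y => ⟨a⁻¹ * (y - b), ?_⟩⟩
    field_simp
    ring
  -- Step 1 : first sum = ∑ χ(K) + 1
  have hstep1 : (∑ z : F, quadraticChar F
        ((z * (z - 1 - u)) * (z * (z - 1 + u)) * (-(1 + s) * (z + 1 - s))))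
      = (∑ z : F, quadraticChar F (-(((1 + s) * z + u ^ 2) * (z ^ 2 + z + s ^ 2)))) + 1 := by
    have hpt : ∀ z : F, quadraticChar F
          ((z * (z - 1 - u)) * (z * (z - 1 + u)) * (-(1 + s) * (z + 1 - s)))
        = quadraticChar F (-(((1 + s) * z + u ^ 2) * (z ^ 2 + z + s ^ 2)))
          + (if z = 0 then 1 else 0) := by
      intro z
      by_cases hz : z = 0
      · subst hz
        rw [if_pos rfl,
          show ((0 : F) * (0 - 1 - u)) * ((0 : F) * (0 - 1 + u)) * (-(1 + s) * (0 + 1 - s)) = 0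
            from by ring,
          show -(((1 + s) * (0 : F) + u ^ 2) * ((0 : F) ^ 2 + 0 + s ^ 2)) = (-1) * (u * s) ^ 2
            from by ring,
          map_mul, hm1, quadraticChar_sq_one' (mul_ne_zero hu0 hs0), quadraticChar_zero]
        norm_num
      · rw [if_neg hz, add_zero,
          show (z * (z - 1 - u)) * (z * (z - 1 + u)) * (-(1 + s) * (z + 1 - s))
            = z ^ 2 * (-(((1 + s) * z + u ^ 2) * (z ^ 2 + z + s ^ 2))) from by
            linear_combination (z^4 + z^3*s + 2*z^3 + z^2) * hs
              + (z^4*s + z^4 + (-1)*z^3*s^2 + z^3) * h3,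
          map_mul, quadraticChar_sq_one' hz, one_mul]
    rw [Finset.sum_congr rfl fun z _ => hpt z, Finset.sum_add_distrib]
    congr 1
    simp
  -- Step 2 : ∑ χ(K) = ∑ χ(G₁)
  have hCgen : ∀ y : F, (1 + s) ^ 2 *
        (-(((1 + s) * ((s - 1) - y) + u ^ 2) * (((s - 1) - y) ^ 2 + ((s - 1) - y) + s ^ 2)))
      = ((1 + s) * y) ^ 3 + (1 + s) ^ 2 * ((1 + s) * y) ^ 2 - s * (1 + s) ^ 3 * ((1 + s) * y) := by
    intro y
    linear_combination ((-1)*y^2*s^2 + (-2)*y^2*s + (-1)*y^2 + 2*y*s^3 + 3*y*s^2 + (-1)*y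
        + (-2)*s^4 + (-3)*s^3 + s) * hs
      + ((-1)*y^2*s^4 + (-3)*y^2*s^3 + (-3)*y^2*s^2 + (-1)*y^2*s + y*s^5 + 3*y*s^4 + 3*y*s^3
        + y*s^2) * h3
  have hstep2 : (∑ z : F, quadraticChar F (-(((1 + s) * z + u ^ 2) * (z ^ 2 + z + s ^ 2))))
      = ∑ x : F, quadraticChar F (x ^ 3 + (1 + s) ^ 2 * x ^ 2 - s * (1 + s) ^ 3 * x) := by
    rw [← hbijsum (fun x : F => (s - 1) + (-(1 + s)⁻¹) * x)
      (haff _ _ (neg_ne_zero.mpr (inv_ne_zero hφ)))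
      (fun z => quadraticChar F (-(((1 + s) * z + u ^ 2) * (z ^ 2 + z + s ^ 2))))]
    refine Finset.sum_congr rfl fun x _ => ?_
    have hy : (1 + s) * ((1 + s)⁻¹ * x) = x := by field_simp
    have hC := hCgen ((1 + s)⁻¹ * x)
    rw [hy] at hC
    show quadraticChar F
        (-(((1 + s) * ((s - 1) + (-(1 + s)⁻¹) * x) + u ^ 2)
          * (((s - 1) + (-(1 + s)⁻¹) * x) ^ 2 + ((s - 1) + (-(1 + s)⁻¹) * x) + s ^ 2)))
      = quadraticChar F (x ^ 3 + (1 + s) ^ 2 * x ^ 2 - s * (1 + s) ^ 3 * x)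
    rw [show (s - 1) + (-(1 + s)⁻¹) * x = (s - 1) - (1 + s)⁻¹ * x from by ring, ← hC,
      map_mul, quadraticChar_sq_one' hφ, one_mul]
  -- Step 3 : second sum = ∑ χ(q)
  have hstep3 : (∑ z : F, quadraticChar F
        ((-(u + 1) * z) * (z * (z - 1 - u)) * (z * (z - 1 + u)) * (-(1 + s) * (z + 1 - s))))
      = ∑ z : F, quadraticChar F ((u + 1) * z * (z ^ 2 + z + s ^ 2) * ((1 + s) * z + u ^ 2)) := by
    refine Finset.sum_congr rfl fun z _ => ?_
    by_cases hz : z = 0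
    · subst hz
      rw [show (-(u + 1) * (0 : F)) * ((0 : F) * (0 - 1 - u)) * ((0 : F) * (0 - 1 + u))
            * (-(1 + s) * (0 + 1 - s)) = 0 from by ring,
          show (u + 1) * (0 : F) * ((0 : F) ^ 2 + 0 + s ^ 2) * ((1 + s) * 0 + u ^ 2) = 0
            from by ring]
    · rw [show (-(u + 1) * z) * (z * (z - 1 - u)) * (z * (z - 1 + u)) * (-(1 + s) * (z + 1 - s))
          = z ^ 2 * ((u + 1) * z * (z ^ 2 + z + s ^ 2) * ((1 + s) * z + u ^ 2)) from by
          linear_combination ((-1)*z^5*u + (-1)*z^5 + (-1)*z^4*u*s + (-2)*z^4*u + (-1)*z^4*s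
              + (-2)*z^4 + (-1)*z^3*u + (-1)*z^3) * hs
            + ((-1)*z^5*u*s + (-1)*z^5*u + (-1)*z^5*s + (-1)*z^5 + z^4*u*s^2 + (-1)*z^4*u
              + z^4*s^2 + (-1)*z^4) * h3,
        map_mul, quadraticChar_sq_one' hz, one_mul]
  -- Step 4 : ∑ χ(q) = 1 - ∑ χ(H)
  have hstep4 : (∑ z : F, quadraticChar F ((u + 1) * z * (z ^ 2 + z + s ^ 2) * ((1 + s) * z + u ^ 2)))
      = 1 - ∑ z : F, quadraticChar F
          ((1 + z) * (s ^ 2 * (1 + s) ^ 2 * z ^ 2 + u ^ 2 * (1 + s) * z + u ^ 4)) := by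
    set ι : F → F := fun z => if z = 0 then 0 else u ^ 2 * ((1 + s) * z)⁻¹ with hιdef
    have hιne : ∀ z : F, z ≠ 0 → ι z = u ^ 2 * ((1 + s) * z)⁻¹ := by
      intro z hz; simp only [hιdef, if_neg hz]
    have hιinv : Function.Involutive ι := by
      intro z
      by_cases hz : z = 0
      · simp [hιdef, hz]
      · have h2 : ι z ≠ 0 := by
          rw [hιne z hz]
          exact mul_ne_zero (pow_ne_zero 2 hu0) (inv_ne_zero (mul_ne_zero hφ hz))
        rw [hιne _ h2, hιne z hz]
        field_simp
    have hpt : ∀ z : F, quadraticChar F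
          ((u + 1) * ι z * ((ι z) ^ 2 + ι z + s ^ 2) * ((1 + s) * ι z + u ^ 2))
        = -quadraticChar F ((1 + z) * (s ^ 2 * (1 + s) ^ 2 * z ^ 2 + u ^ 2 * (1 + s) * z + u ^ 4))
          + (if z = 0 then 1 else 0) := by
      intro z
      by_cases hz : z = 0
      · subst hz
        have hι0 : ι (0 : F) = 0 := by simp [hιdef]
        rw [if_pos rfl, hι0,
          show (u + 1) * (0 : F) * ((0 : F) ^ 2 + 0 + s ^ 2) * ((1 + s) * 0 + u ^ 2) = 0
            from by ring,
          show ((1 : F) + 0) * (s ^ 2 * (1 + s) ^ 2 * 0 ^ 2 + u ^ 2 * (1 + s) * 0 + u ^ 4)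
            = (u ^ 2) ^ 2 from by ring,
          quadraticChar_zero, quadraticChar_sq_one' (pow_ne_zero 2 hu0)]
        norm_num
      · rw [if_neg hz, add_zero, hιne z hz]
        have hcz : (1 + s) * z ≠ 0 := mul_ne_zero hφ hz
        have hE : (u + 1) * (u ^ 2 * ((1 + s) * z)⁻¹)
              * ((u ^ 2 * ((1 + s) * z)⁻¹) ^ 2 + u ^ 2 * ((1 + s) * z)⁻¹ + s ^ 2)
              * ((1 + s) * (u ^ 2 * ((1 + s) * z)⁻¹) + u ^ 2)
            = ((u + 1) * (1 + s)) * (((u * ((1 + s) * z)⁻¹) ^ 2) ^ 2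
              * ((1 + z) * (s ^ 2 * (1 + s) ^ 2 * z ^ 2 + u ^ 2 * (1 + s) * z + u ^ 4))) := by
          have hw : ((1 + s) * z) * ((1 + s) * z)⁻¹ = 1 := mul_inv_cancel₀ hcz
          linear_combination ((-1)*z^2*(((1+s)*z)⁻¹)^3*u^5*s^4 + (-2)*z^2*(((1+s)*z)⁻¹)^3*u^5*s^3 + (-1)*z^2*(((1+s)*z)⁻¹)^3*u^5*s^2 + (-1)*z^2*(((1+s)*z)⁻¹)^3*u^4*s^4 + (-2)*z^2*(((1+s)*z)⁻¹)^3*u^4*s^3 + (-1)*z^2*(((1+s)*z)⁻¹)^3*u^4*s^2 + (-1)*z*(((1+s)*z)⁻¹)^3*u^7*s + (-1)*z*(((1+s)*z)⁻¹)^3*u^7 + (-1)*z*(((1+s)*z)⁻¹)^3*u^6*s + (-1)*z*(((1+s)*z)⁻¹)^3*u^6 + (-1)*z*(((1+s)*z)⁻¹)^3*u^5*s^4 + (-2)*z*(((1+s)*z)⁻¹)^3*u^5*s^3 + (-1)*z*(((1+s)*z)⁻¹)^3*u^5*s^2 + (-1)*z*(((1+s)*z)⁻¹)^3*u^4*s^4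 + (-2)*z*(((1+s)*z)⁻¹)^3*u^4*s^3 + (-1)*z*(((1+s)*z)⁻¹)^3*u^4*s^2 + (-1)*z*(((1+s)*z)⁻¹)^2*u^5*s^3 + (-1)*z*(((1+s)*z)⁻¹)^2*u^5*s^2 + (-1)*z*(((1+s)*z)⁻¹)^2*u^4*s^3 + (-1)*z*(((1+s)*z)⁻¹)^2*u^4*s^2 + (-1)*(((1+s)*z)⁻¹)^3*u^9 + (-1)*(((1+s)*z)⁻¹)^3*u^8 + (-1)*(((1+s)*z)⁻¹)^3*u^7*s + (-1)*(((1+s)*z)⁻¹)^3*u^7 + (-1)*(((1+s)*z)⁻¹)^3*u^6*s + (-1)*(((1+s)*z)⁻¹)^3*u^6 + (-1)*(((1+s)*z)⁻¹)^2*u^7 + (-1)*(((1+s)*z)⁻¹)^2*u^6 + (-1)*(((1+s)*z)⁻¹)^2*u^5*s^3 + (-1)*(((1+s)*z)⁻¹)^2*u^5*s^2 + (-1)*(((1+s)*z)⁻¹)^2*u^4*s^3 + (-1)*(((1+s)*z)⁻¹)^2*u^4*s^2 + (-1)*((1+s)*z)⁻¹*u^5*s^2 + (-1)*((1+s)*z)⁻¹*u^4*s^2)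 * hw
        have hX2 : (u * ((1 + s) * z)⁻¹) ^ 2 ≠ 0 :=
          pow_ne_zero 2 (mul_ne_zero hu0 (inv_ne_zero hcz))
        calc quadraticChar F ((u + 1) * (u ^ 2 * ((1 + s) * z)⁻¹)
              * ((u ^ 2 * ((1 + s) * z)⁻¹) ^ 2 + u ^ 2 * ((1 + s) * z)⁻¹ + s ^ 2)
              * ((1 + s) * (u ^ 2 * ((1 + s) * z)⁻¹) + u ^ 2))
            = quadraticChar F (((u + 1) * (1 + s)) * (((u * ((1 + s) * z)⁻¹) ^ 2) ^ 2
              * ((1 + z) * (s ^ 2 * (1 + s) ^ 2 * z ^ 2 + u ^ 2 * (1 + s) * z + u ^ 4)))) := by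
              rw [hE]
          _ = quadraticChar F ((u + 1) * (1 + s))
              * quadraticChar F (((u * ((1 + s) * z)⁻¹) ^ 2) ^ 2
                * ((1 + z) * (s ^ 2 * (1 + s) ^ 2 * z ^ 2 + u ^ 2 * (1 + s) * z + u ^ 4))) :=
              map_mul _ _ _
          _ = quadraticChar F ((u + 1) * (1 + s))
              * (quadraticChar F (((u * ((1 + s) * z)⁻¹) ^ 2) ^ 2)
                * quadraticChar F
                  ((1 + z) * (s ^ 2 * (1 + s) ^ 2 * z ^ 2 + u ^ 2 * (1 + s) * z + u ^ 4))) := by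
              rw [map_mul (quadraticChar F) (((u * ((1 + s) * z)⁻¹) ^ 2) ^ 2)
                ((1 + z) * (s ^ 2 * (1 + s) ^ 2 * z ^ 2 + u ^ 2 * (1 + s) * z + u ^ 4))]
          _ = -quadraticChar F
                ((1 + z) * (s ^ 2 * (1 + s) ^ 2 * z ^ 2 + u ^ 2 * (1 + s) * z + u ^ 4)) := by
              rw [hkey, quadraticChar_sq_one' hX2]; ring
    calc (∑ z : F, quadraticChar F
            ((u + 1) * z * (z ^ 2 + z + s ^ 2) * ((1 + s) * z + u ^ 2)))
        = ∑ z : F, quadraticChar F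
            ((u + 1) * ι z * ((ι z) ^ 2 + ι z + s ^ 2) * ((1 + s) * ι z + u ^ 2)) :=
          (hbijsum ι hιinv.bijective
            (fun z => quadraticChar F
              ((u + 1) * z * (z ^ 2 + z + s ^ 2) * ((1 + s) * z + u ^ 2)))).symm
      _ = ∑ z : F, (-quadraticChar F
            ((1 + z) * (s ^ 2 * (1 + s) ^ 2 * z ^ 2 + u ^ 2 * (1 + s) * z + u ^ 4))
            + (if z = 0 then 1 else 0)) := Finset.sum_congr rfl fun z _ => hpt z
      _ = (∑ z : F, -quadraticChar F
            ((1 + z) * (s ^ 2 * (1 + s) ^ 2 * z ^ 2 + u ^ 2 * (1 + s) * z + u ^ 4)))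
            + ∑ z : F, (if z = (0 : F) then (1 : ℤ) else 0) := Finset.sum_add_distrib
      _ = 1 - ∑ z : F, quadraticChar F
            ((1 + z) * (s ^ 2 * (1 + s) ^ 2 * z ^ 2 + u ^ 2 * (1 + s) * z + u ^ 4)) := by
          rw [Finset.sum_neg_distrib]
          simp
          ring
  -- Step 5 : ∑ χ(H) = ∑ χ(G₂)
  have hDgen : ∀ y : F, (s ^ 2 * (1 + s) ^ 2) ^ 2 *
        ((1 + (y - 1)) * (s ^ 2 * (1 + s) ^ 2 * (y - 1) ^ 2 + u ^ 2 * (1 + s) * (y - 1) + u ^ 4))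
      = (s ^ 2 * (1 + s) ^ 2 * y) ^ 3 + (1 + s) ^ 4 * (s ^ 2 * (1 + s) ^ 2 * y) ^ 2
        - s ^ 3 * (1 + s) ^ 5 * (s ^ 2 * (1 + s) ^ 2 * y) := by
    intro y
    linear_combination (y^2*s^9 + 5*y^2*s^8 + 10*y^2*s^7 + 10*y^2*s^6 + 5*y^2*s^5 + y^2*s^4
        + y*u^2*s^8 + 4*y*u^2*s^7 + 6*y*u^2*s^6 + 4*y*u^2*s^5 + y*u^2*s^4 + (-1)*y*s^10
        + (-5)*y*s^9 + (-10)*y*s^8 + (-10)*y*s^7 + (-5)*y*s^6 + (-1)*y*s^5) * hs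
      + ((-1)*y^2*s^12 + (-7)*y^2*s^11 + (-21)*y^2*s^10 + (-35)*y^2*s^9 + (-35)*y^2*s^8
        + (-21)*y^2*s^7 + (-7)*y^2*s^6 + (-1)*y^2*s^5 + y*s^12 + 6*y*s^11 + 15*y*s^10
        + 20*y*s^9 + 15*y*s^8 + 6*y*s^7 + y*s^6) * h3
  have hc2 : s ^ 2 * (1 + s) ^ 2 ≠ 0 := mul_ne_zero (pow_ne_zero 2 hs0) (pow_ne_zero 2 hφ)
  have hstep5 : (∑ z : F, quadraticChar F
        ((1 + z) * (s ^ 2 * (1 + s) ^ 2 * z ^ 2 + u ^ 2 * (1 + s) * z + u ^ 4)))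
      = ∑ x : F, quadraticChar F (x ^ 3 + (1 + s) ^ 4 * x ^ 2 - s ^ 3 * (1 + s) ^ 5 * x) := by
    rw [← hbijsum (fun x : F => (-1) + (s ^ 2 * (1 + s) ^ 2)⁻¹ * x)
      (haff _ _ (inv_ne_zero hc2))
      (fun z => quadraticChar F
        ((1 + z) * (s ^ 2 * (1 + s) ^ 2 * z ^ 2 + u ^ 2 * (1 + s) * z + u ^ 4)))]
    refine Finset.sum_congr rfl fun x _ => ?_
    have hy : s ^ 2 * (1 + s) ^ 2 * ((s ^ 2 * (1 + s) ^ 2)⁻¹ * x) = x := by field_simp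
    have hD := hDgen ((s ^ 2 * (1 + s) ^ 2)⁻¹ * x)
    rw [hy] at hD
    show quadraticChar F
        ((1 + ((-1) + (s ^ 2 * (1 + s) ^ 2)⁻¹ * x))
          * (s ^ 2 * (1 + s) ^ 2 * ((-1) + (s ^ 2 * (1 + s) ^ 2)⁻¹ * x) ^ 2
            + u ^ 2 * (1 + s) * ((-1) + (s ^ 2 * (1 + s) ^ 2)⁻¹ * x) + u ^ 4))
      = quadraticChar F (x ^ 3 + (1 + s) ^ 4 * x ^ 2 - s ^ 3 * (1 + s) ^ 5 * x)
    rw [show (-1 : F) + (s ^ 2 * (1 + s) ^ 2)⁻¹ * x = ((s ^ 2 * (1 + s) ^ 2)⁻¹ * x) - 1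
        from by ring, ← hD,
      map_mul (quadraticChar F) ((s ^ 2 * (1 + s) ^ 2) ^ 2)
        ((1 + ((s ^ 2 * (1 + s) ^ 2)⁻¹ * x - 1))
          * (s ^ 2 * (1 + s) ^ 2 * ((s ^ 2 * (1 + s) ^ 2)⁻¹ * x - 1) ^ 2
            + u ^ 2 * (1 + s) * ((s ^ 2 * (1 + s) ^ 2)⁻¹ * x - 1) + u ^ 4)),
      quadraticChar_sq_one' hc2, one_mul]
  -- Step 6 : ∑ χ(G₂) = ∑ χ(G₃)
  have hstep6 : (∑ x : F, quadraticChar F (x ^ 3 + (1 + s) ^ 4 * x ^ 2 - s ^ 3 * (1 + s) ^ 5 * x))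
      = ∑ x : F, quadraticChar F (x ^ 3 + (1 + s) ^ 6 * x ^ 2 - s ^ 3 * (1 + s) ^ 9 * x) := by
    rw [← hbijsum (fun x : F => (0 : F) + (1 + s) ^ 2 * x) (haff _ _ (pow_ne_zero 2 hφ))
      (fun x => quadraticChar F (x ^ 3 + (1 + s) ^ 6 * x ^ 2 - s ^ 3 * (1 + s) ^ 9 * x))]
    refine Finset.sum_congr rfl fun x _ => ?_
    show quadraticChar F (x ^ 3 + (1 + s) ^ 4 * x ^ 2 - s ^ 3 * (1 + s) ^ 5 * x)
      = quadraticChar F (((0 : F) + (1 + s) ^ 2 * x) ^ 3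
        + (1 + s) ^ 6 * ((0 : F) + (1 + s) ^ 2 * x) ^ 2
        - s ^ 3 * (1 + s) ^ 9 * ((0 : F) + (1 + s) ^ 2 * x))
    rw [show ((0 : F) + (1 + s) ^ 2 * x) ^ 3 + (1 + s) ^ 6 * ((0 : F) + (1 + s) ^ 2 * x) ^ 2
        - s ^ 3 * (1 + s) ^ 9 * ((0 : F) + (1 + s) ^ 2 * x)
        = ((1 + s) ^ 3) ^ 2 * (x ^ 3 + (1 + s) ^ 4 * x ^ 2 - s ^ 3 * (1 + s) ^ 5 * x)
        from by ring,
      map_mul, quadraticChar_sq_one' (pow_ne_zero 3 hφ), one_mul]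
  -- Step 7 : ∑ χ(G₃) = ∑ χ(G₁)  (Frobenius)
  have hfrob : Function.Bijective fun x : F => x ^ 3 := by
    rw [← Finite.injective_iff_bijective]
    intro a b hab
    simp only [] at hab
    have h1 : (a - b) ^ 3 = 0 := by
      linear_combination hab + (a * b ^ 2 - a ^ 2 * b) * h3
    exact sub_eq_zero.mp (pow_eq_zero_iff (by norm_num : (3 : ℕ) ≠ 0) |>.mp h1)
  have hstep7 : (∑ x : F, quadraticChar F (x ^ 3 + (1 + s) ^ 6 * x ^ 2 - s ^ 3 * (1 + s) ^ 9 * x))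
      = ∑ x : F, quadraticChar F (x ^ 3 + (1 + s) ^ 2 * x ^ 2 - s * (1 + s) ^ 3 * x) := by
    rw [← hbijsum (fun x : F => x ^ 3) hfrob
      (fun x => quadraticChar F (x ^ 3 + (1 + s) ^ 6 * x ^ 2 - s ^ 3 * (1 + s) ^ 9 * x))]
    refine Finset.sum_congr rfl fun y _ => ?_
    show quadraticChar F ((y ^ 3) ^ 3 + (1 + s) ^ 6 * (y ^ 3) ^ 2 - s ^ 3 * (1 + s) ^ 9 * y ^ 3)
      = quadraticChar F (y ^ 3 + (1 + s) ^ 2 * y ^ 2 - s * (1 + s) ^ 3 * y)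
    have hF3 : (y ^ 3) ^ 3 + (1 + s) ^ 6 * (y ^ 3) ^ 2 - s ^ 3 * (1 + s) ^ 9 * y ^ 3
        = (y ^ 3 + (1 + s) ^ 2 * y ^ 2 - s * (1 + s) ^ 3 * y) ^ 3 := by
      linear_combination ((-1)*y^8*s^2 + (-2)*y^8*s + (-1)*y^8 + (-1)*y^7*s^3 + (-3)*y^7*s^2
        + (-3)*y^7*s + (-1)*y^7 + 2*y^6*s^6 + 10*y^6*s^5 + 20*y^6*s^4 + 20*y^6*s^3 + 10*y^6*s^2
        + 2*y^6*s + y^5*s^7 + 6*y^5*s^6 + 15*y^5*s^5 + 20*y^5*s^4 + 15*y^5*s^3 + 6*y^5*s^2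
        + y^5*s + (-1)*y^4*s^10 + (-8)*y^4*s^9 + (-28)*y^4*s^8 + (-56)*y^4*s^7 + (-70)*y^4*s^6
        + (-56)*y^4*s^5 + (-28)*y^4*s^4 + (-8)*y^4*s^3 + (-1)*y^4*s^2) * h3
    rw [hF3]
    by_cases ht : y ^ 3 + (1 + s) ^ 2 * y ^ 2 - s * (1 + s) ^ 3 * y = 0
    · rw [ht, show ((0 : F)) ^ 3 = 0 from by norm_num]
    · rw [show (y ^ 3 + (1 + s) ^ 2 * y ^ 2 - s * (1 + s) ^ 3 * y) ^ 3
          = (y ^ 3 + (1 + s) ^ 2 * y ^ 2 - s * (1 + s) ^ 3 * y)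
            * (y ^ 3 + (1 + s) ^ 2 * y ^ 2 - s * (1 + s) ^ 3 * y) ^ 2 from by ring,
        map_mul, quadraticChar_sq_one' ht, mul_one]
  rw [hstep1, hstep2, hstep3, hstep4, hstep5, hstep6, hstep7]
  ring
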